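/- (Pointwise bound in the proof of Lemma 4) In the spatial model, for every ε > 0, every γ ≥ 0, and every point x ∈ A with dist(χ_i, x) < ε, the attachment ratio satisfies r_i(γ, x) ≥ exp(−2γε) · p_i^{local}(γ). -/
import Mathlib


open Finset Real

/-- Pointwise bound in the proof of Lemma 4: in the spatial model, for every `ε > 0`,
every `γ ≥ 0`, and every point `x` with `dist (χ i) x < ε`, the attachment ratio
satisfies `r_i(γ, x) ≥ exp (-2γε) · p_i^{local}(γ)`. -/
theorem spatial_attachment_ratio_pointwise_bound
    {A : Type*} [MetricSpace A] {V : Type*} [Fintype V] [Nonempty V]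
    (χ : V → A) (β : V → ℝ) (hβ : ∀ j, 0 < β j)
    (ε : ℝ) (hε : 0 < ε) (γ : ℝ) (hγ : 0 ≤ γ) (i : V)
    (x : A) (hx : dist (χ i) x < ε) :
    Real.exp (-γ * dist (χ i) x) * β i / (∑ j, Real.exp (-γ * dist (χ j) x) * β j)
      ≥ Real.exp (-(2 * γ * ε)) *
          (β i / ∑ j, Real.exp (-γ * dist (χ j) (χ i)) * β j) := by
  set S : ℝ := ∑ j, Real.exp (-γ * dist (χ j) (χ i)) * β j with hS
  set T : ℝ := ∑ j, Real.exp (-γ * dist (χ j) x) * β j with hT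
  have hSpos : 0 < S :=
    Finset.sum_pos (fun j _ => mul_pos (Real.exp_pos _) (hβ j)) Finset.univ_nonempty
  have hTpos : 0 < T :=
    Finset.sum_pos (fun j _ => mul_pos (Real.exp_pos _) (hβ j)) Finset.univ_nonempty
  -- denominator bound: T ≤ exp (γ * ε) * S
  have hTle : T ≤ Real.exp (γ * ε) * S := by
    rw [hT, hS, Finset.mul_sum]
    refine Finset.sum_le_sum fun j _ => ?_
    rw [← mul_assoc, ← Real.exp_add]
    refine mul_le_mul_of_nonneg_right (Real.exp_le_exp.2 ?_) (hβ j).le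
    have htri : dist (χ j) (χ i) - ε ≤ dist (χ j) x := by
      have h1 := dist_triangle (χ j) x (χ i)
      rw [dist_comm x (χ i)] at h1
      linarith
    nlinarith [mul_le_mul_of_nonneg_left htri hγ]
  -- numerator bound
  have hNum : Real.exp (-(γ * ε)) * β i ≤ Real.exp (-γ * dist (χ i) x) * β i := by
    refine mul_le_mul_of_nonneg_right (Real.exp_le_exp.2 ?_) (hβ i).le
    nlinarith [mul_le_mul_of_nonneg_left hx.le hγ]
  have key : Real.exp (-(γ * ε)) * β i / (Real.exp (γ * ε) * S)
      ≤ Real.exp (-γ * dist (χ i) x) * β i / T :=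
    div_le_div₀ (mul_nonneg (Real.exp_pos _).le (hβ i).le) hNum hTpos hTle
  refine le_trans (le_of_eq ?_) key
  rw [show rexp (-(2 * γ * ε)) = rexp (-(γ * ε)) / rexp (γ * ε) by
        rw [← Real.exp_sub]; ring_nf]
  field_simp
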